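/- In a monster model U of CODF, the differential-algebraic closure operator cl, defined by a ∈ cl(B) iff there is a non-zero differential polynomial q over the differential subfield generated by B with q(a) = 0, satisfies the exchange property: if a ∈ cl(B ∪ {b}) \ cl(B), then b ∈ cl(B ∪ {a}). -/

import Mathlib

open MvPolynomial

/-- A closed ordered differential field (CODF): a real closed ordered field equipped with
a derivation `δ` satisfying Singer's genericity axiom scheme. A differential polynomial
`f ∈ K{x}` of order `n` is represented by the ordinary polynomial `F = f*` in the
variables `δ⁰(x), …, δⁿ(x)` (the order condition is that `F` really involves the last
variable), and `f(a) = F(a, δ(a), …, δⁿ(a))`. -/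
class CODF (K : Type*) [Field K] [LinearOrder K] [IsStrictOrderedRing K] where
  /-- the derivation -/
  δ : K → K
  δ_add : ∀ x y : K, δ (x + y) = δ x + δ y
  δ_mul : ∀ x y : K, δ (x * y) = x * δ y + δ x * y
  /-- real closedness: non-negative elements are squares -/
  sq_root : ∀ a : K, 0 ≤ a → ∃ b : K, b * b = a
  /-- real closedness: odd-degree polynomials have roots -/
  odd_root : ∀ p : Polynomial K, Odd p.natDegree → ∃ x : K, Polynomial.eval x p = 0
  /-- the CODF axiom scheme -/
  generic : ∀ (n : ℕ) (F : MvPolynomial (Fin (n + 1)) K),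
    degreeOf (Fin.last n) F ≠ 0 →
    ∀ ε : K, 0 < ε → ∀ c : Fin (n + 1) → K,
      eval c F = 0 → eval c (pderiv (Fin.last n) F) ≠ 0 →
      ∃ a : K, eval (fun i : Fin (n + 1) => δ^[(i : ℕ)] a) F = 0 ∧
        ∀ i : Fin (n + 1), |δ^[(i : ℕ)] a - c i| < ε

/-- The sequence of iterated derivatives `(a, δ(a), …, δ^{n-1}(a))` of `a`. -/
def derivVec {K : Type*} [Field K] [LinearOrder K] [IsStrictOrderedRing K] [CODF K] (n : ℕ) (a : K) :
    Fin n → K := fun i => CODF.δ^[(i : ℕ)] a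

/-- The differential subfield `ℚ⟨B⟩` of `U` generated by `B`: the subfield generated by
all iterated derivatives of elements of `B` (it contains the prime field `ℚ`). -/
def derivClosure {U : Type*} [Field U] [LinearOrder U] [IsStrictOrderedRing U] [CODF U] (B : Set U) : Subfield U :=
  Subfield.closure (⋃ b ∈ B, Set.range fun k : ℕ => CODF.δ^[k] b)

/-- The differential-algebraic closure operator: `a ∈ cl(B)` iff there is a non-zero
differential polynomial `q ∈ ℚ⟨B⟩{x}` with `q(a) = 0`; `q` of order `m` is represented by
a non-zero ordinary polynomial over `ℚ⟨B⟩` in the variables `δ⁰(x), …, δᵐ(x)`. -/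
def InCl {U : Type*} [Field U] [LinearOrder U] [IsStrictOrderedRing U] [CODF U] (B : Set U) (a : U) : Prop :=
  ∃ (m : ℕ) (P : MvPolynomial (Fin (m + 1)) (derivClosure B)), P ≠ 0 ∧
    eval (derivVec (m + 1) a) (P.map (derivClosure B).subtype) = 0

set_option synthInstance.maxHeartbeats 1000000
set_option maxHeartbeats 1000000

section ExchangeAux

variable {U : Type*} [Field U] [LinearOrder U] [IsStrictOrderedRing U] [CODF U]

/-- `x` is a quotient of values (at the derivatives of `b`) of polynomials over `ℚ⟨B⟩`
in the variables `δ⁰(b), …, δⁿ(b)`. -/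
def DRep (B : Set U) (b : U) (n : ℕ) (x : U) : Prop :=
  ∃ p q : MvPolynomial (Fin (n + 1)) (derivClosure B),
    eval (derivVec (n + 1) b) (q.map (derivClosure B).subtype) ≠ 0 ∧
    x * eval (derivVec (n + 1) b) (q.map (derivClosure B).subtype)
      = eval (derivVec (n + 1) b) (p.map (derivClosure B).subtype)

lemma eval_map_rename_castLE (B : Set U) (b : U) {n n' : ℕ} (h : n + 1 ≤ n' + 1)
    (p : MvPolynomial (Fin (n + 1)) (derivClosure B)) :
    eval (derivVec (n' + 1) b) ((rename (Fin.castLE h) p).map (derivClosure B).subtype)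
      = eval (derivVec (n + 1) b) (p.map (derivClosure B).subtype) := by
  rw [map_rename, eval_rename]
  rfl

lemma DRep.mono {B : Set U} {b x : U} {n n' : ℕ} (h : DRep B b n x) (hn : n ≤ n') :
    DRep B b n' x := by
  obtain ⟨p, q, hq, he⟩ := h
  have h1 : n + 1 ≤ n' + 1 := by omega
  exact ⟨rename (Fin.castLE h1) p, rename (Fin.castLE h1) q,
    by rw [eval_map_rename_castLE]; exact hq,
    by rw [eval_map_rename_castLE, eval_map_rename_castLE]; exact he⟩

lemma exists_dRep (B : Set U) (b : U) {x : U} (hx : x ∈ derivClosure (B ∪ {b})) :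
    ∃ n, DRep B b n x := by
  induction hx using Subfield.closure_induction with
  | mem x hx =>
    simp only [Set.mem_iUnion, Set.mem_range] at hx
    obtain ⟨c, hc, k, rfl⟩ := hx
    rcases hc with hc | hc
    · have hmem : CODF.δ^[k] c ∈ derivClosure B :=
        Subfield.subset_closure (Set.mem_biUnion hc ⟨k, rfl⟩)
      exact ⟨0, C ⟨_, hmem⟩, 1, by simp, by simp⟩
    · rcases Set.mem_singleton_iff.mp hc with rfl
      refine ⟨k, X (Fin.last k), 1, by simp, ?_⟩
      simp [derivVec]
  | one => exact ⟨0, 1, 1, by simp, by simp⟩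
  | add x y hx hy ihx ihy =>
    obtain ⟨n₁, h₁⟩ := ihx
    obtain ⟨n₂, h₂⟩ := ihy
    obtain ⟨p₁, q₁, hq₁, he₁⟩ := h₁.mono (le_max_left n₁ n₂)
    obtain ⟨p₂, q₂, hq₂, he₂⟩ := h₂.mono (le_max_right n₁ n₂)
    refine ⟨max n₁ n₂, p₁ * q₂ + p₂ * q₁, q₁ * q₂, ?_, ?_⟩
    · simp only [map_mul]
      exact mul_ne_zero hq₁ hq₂
    · simp only [map_mul, map_add]
      linear_combination (eval (derivVec (max n₁ n₂ + 1) b) (q₂.map (derivClosure B).subtype)) * he₁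
        + (eval (derivVec (max n₁ n₂ + 1) b) (q₁.map (derivClosure B).subtype)) * he₂
  | neg x hx ihx =>
    obtain ⟨n, p, q, hq, he⟩ := ihx
    refine ⟨n, -p, q, hq, ?_⟩
    simp only [map_neg]
    linear_combination -he
  | inv x hx ihx =>
    obtain ⟨n, p, q, hq, he⟩ := ihx
    by_cases hx0 : x = 0
    · exact ⟨0, 0, 1, by simp, by simp [hx0]⟩
    · have hp0 : eval (derivVec (n + 1) b) (p.map (derivClosure B).subtype) ≠ 0 := by
        rw [← he]; exact mul_ne_zero hx0 hq
      refine ⟨n, q, p, hp0, ?_⟩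
      rw [← he]
      field_simp
  | mul x y hx hy ihx ihy =>
    obtain ⟨n₁, h₁⟩ := ihx
    obtain ⟨n₂, h₂⟩ := ihy
    obtain ⟨p₁, q₁, hq₁, he₁⟩ := h₁.mono (le_max_left n₁ n₂)
    obtain ⟨p₂, q₂, hq₂, he₂⟩ := h₂.mono (le_max_right n₁ n₂)
    refine ⟨max n₁ n₂, p₁ * p₂, q₁ * q₂, ?_, ?_⟩
    · simp only [map_mul]
      exact mul_ne_zero hq₁ hq₂
    · simp only [map_mul]
      linear_combination (y * eval (derivVec (max n₁ n₂ + 1) b) (q₂.map (derivClosure B).subtype)) * he₁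
        + (eval (derivVec (max n₁ n₂ + 1) b) (p₁.map (derivClosure B).subtype)) * he₂

end ExchangeAux

/-- in a monster model `U` of CODF, the closure operator `cl` satisfies the
exchange property: if `a ∈ cl(B ∪ {b}) \ cl(B)`, then `b ∈ cl(B ∪ {a})`. -/
theorem codf_cl_exchange {U : Type*} [Field U] [LinearOrder U] [IsStrictOrderedRing U] [CODF U]
    (B : Set U) (a b : U) (h₁ : InCl (B ∪ {b}) a) (h₂ : ¬ InCl B a) :
    InCl (B ∪ {a}) b := by
  classical
  obtain ⟨m, P, hP0, hPe⟩ := h₁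
  have h₂' : ∀ (k : ℕ) (p : MvPolynomial (Fin (k + 1)) (derivClosure B)),
      eval (derivVec (k + 1) a) (p.map (derivClosure B).subtype) = 0 → p = 0 := by
    intro k p hp
    by_contra hne
    exact h₂ ⟨k, p, hne, hp⟩
  have hKle : derivClosure B ≤ derivClosure (B ∪ {a}) :=
    Subfield.closure_mono (Set.biUnion_subset_biUnion_left Set.subset_union_left)
  have hrepn : ∀ s : Fin (m + 1) →₀ ℕ, ∃ n, DRep B b n (P.coeff s).val :=
    fun s => exists_dRep B b (P.coeff s).2
  choose nn hnn using hrepn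
  set N := P.support.sup nn with hN
  have hrep : ∀ s : Fin (m + 1) →₀ ℕ, DRep B b N (P.coeff s).val := by
    intro s
    by_cases hs : s ∈ P.support
    · exact (hnn s).mono (Finset.le_sup hs)
    · exact ⟨0, 1, by simp, by simp [MvPolynomial.notMem_support_iff.mp hs]⟩
  simp only [DRep] at hrep
  choose p q hq he using hrep
  set db := derivVec (N + 1) b with hdb
  set ev : MvPolynomial (Fin (N + 1)) (derivClosure B) → U :=
    fun r => eval db (r.map (derivClosure B).subtype) with hev
  set D := ∏ t ∈ P.support, ev (q t) with hD
  have hD0 : D ≠ 0 := Finset.prod_ne_zero_iff.mpr fun t _ => hq t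
  -- the partial-evaluation homomorphism at the derivatives of `a`
  set φ : MvPolynomial (Fin (m + 1)) (derivClosure B) →+* U :=
    (eval (derivVec (m + 1) a)).comp (MvPolynomial.map (derivClosure B).subtype) with hφ
  have hφinj : Function.Injective φ := by
    rw [injective_iff_map_eq_zero]
    exact fun p0 hp0 => h₂' m p0 hp0
  have hφC : ∀ c : derivClosure B, φ (C c) = (c : U) := by
    intro c; simp [hφ]
  have hφmem : ∀ r : MvPolynomial (Fin (m + 1)) (derivClosure B),
      φ r ∈ derivClosure (B ∪ {a}) := by
    intro r
    induction r using MvPolynomial.induction_on with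
    | C c => rw [hφC]; exact hKle c.2
    | add p₀ q₀ hp₀ hq₀ => rw [map_add]; exact add_mem hp₀ hq₀
    | mul_X p₀ i hp₀ =>
      rw [map_mul]
      refine mul_mem hp₀ ?_
      have hX : φ (X i) = CODF.δ^[(i : ℕ)] a := by simp [hφ, derivVec]
      rw [hX]
      exact Subfield.subset_closure
        (Set.mem_biUnion (Set.mem_union_right _ rfl) ⟨(i : ℕ), rfl⟩)
  -- the two-sorts polynomial Q
  set Q : MvPolynomial (Fin (N + 1)) (MvPolynomial (Fin (m + 1)) (derivClosure B)) :=
    ∑ s ∈ P.support,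
      MvPolynomial.map (C : (derivClosure B) →+* _) (p s) * C (monomial s 1)
        * ∏ t ∈ P.support.erase s, MvPolynomial.map (C : (derivClosure B) →+* _) (q t)
    with hQdef
  have hprodkey : ∀ s ∈ P.support,
      ev (p s) * ∏ t ∈ P.support.erase s, ev (q t) = D * (P.coeff s).val := by
    intro s hs
    have h' : ev (p s) = (P.coeff s).val * ev (q s) := (he s).symm
    rw [hD, ← Finset.mul_prod_erase _ _ hs, h']
    ring
  -- evaluation of the b-variables only, to see Q ≠ 0
  set ψ : MvPolynomial (Fin (N + 1)) (MvPolynomial (Fin (m + 1)) (derivClosure B)) →+*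
      MvPolynomial (Fin (m + 1)) U :=
    eval₂Hom (MvPolynomial.map (derivClosure B).subtype)
      (fun j => (C (db j) : MvPolynomial (Fin (m + 1)) U)) with hψ
  have hψmapC : ∀ r : MvPolynomial (Fin (N + 1)) (derivClosure B),
      ψ (MvPolynomial.map (C : (derivClosure B) →+* _) r) = C (ev r) := by
    intro r
    show eval₂ _ _ _ = _
    rw [eval₂_map]
    have hc : (MvPolynomial.map (derivClosure B).subtype :
          MvPolynomial (Fin (m + 1)) (derivClosure B) →+* MvPolynomial (Fin (m + 1)) U).comp
        (C : (derivClosure B) →+* _)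
        = (C : U →+* MvPolynomial (Fin (m + 1)) U).comp (derivClosure B).subtype := by
      ext c
      simp
    rw [hc, show (fun j => (C (db j) : MvPolynomial (Fin (m + 1)) U))
        = (C : U →+* MvPolynomial (Fin (m + 1)) U) ∘ db from rfl, ← eval₂_comp_left,
      eval₂_eq_eval_map]
  have hψQ : ψ Q = C D * MvPolynomial.map (derivClosure (B ∪ {b})).subtype P := by
    rw [hQdef, map_sum ψ]
    have hterm : ∀ s ∈ P.support,
        ψ (MvPolynomial.map (C : (derivClosure B) →+* _) (p s) * C (monomial s 1)
          * ∏ t ∈ P.support.erase s, MvPolynomial.map (C : (derivClosure B) →+* _) (q t))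
        = C D * monomial s (P.coeff s).val := by
      intro s hs
      rw [map_mul, map_mul, map_prod ψ]
      simp only [hψmapC]
      have h1 : ψ (C (monomial s 1)) = monomial s (1 : U) := by
        rw [hψ, eval₂Hom_C, map_monomial]
        simp
      rw [h1, ← map_prod (C : U →+* MvPolynomial (Fin (m + 1)) U), mul_right_comm,
        ← C_mul, hprodkey s hs, C_mul, mul_assoc, C_mul_monomial, mul_one]
    rw [Finset.sum_congr rfl hterm, ← Finset.mul_sum]
    congr 1
    conv_rhs => rw [P.as_sum]
    rw [map_sum (MvPolynomial.map (derivClosure (B ∪ {b})).subtype)]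
    simp [map_monomial]
  have hQ0 : Q ≠ 0 := by
    intro h0
    have hψ0 : ψ Q = 0 := by rw [h0, map_zero]
    rw [hψQ] at hψ0
    rcases mul_eq_zero.mp hψ0 with hc | hc
    · exact hD0 (by simpa using hc)
    · exact hP0 (MvPolynomial.map_injective _ Subtype.val_injective (by simpa using hc))
  -- full evaluation
  set χ : MvPolynomial (Fin (N + 1)) (MvPolynomial (Fin (m + 1)) (derivClosure B)) →+* U :=
    eval₂Hom φ db with hχ
  have hχmapC : ∀ r : MvPolynomial (Fin (N + 1)) (derivClosure B),
      χ (MvPolynomial.map (C : (derivClosure B) →+* _) r) = ev r := by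
    intro r
    show eval₂ _ _ _ = _
    rw [eval₂_map]
    have hc : φ.comp (C : (derivClosure B) →+* _) = (derivClosure B).subtype :=
      RingHom.ext hφC
    rw [hc, eval₂_eq_eval_map]
  have hχQ : χ Q = 0 := by
    rw [hQdef, map_sum χ]
    have hterm : ∀ s ∈ P.support,
        χ (MvPolynomial.map (C : (derivClosure B) →+* _) (p s) * C (monomial s 1)
          * ∏ t ∈ P.support.erase s, MvPolynomial.map (C : (derivClosure B) →+* _) (q t))
        = ((P.coeff s).val * φ (monomial s 1)) * D := by
      intro s hs
      rw [map_mul, map_mul, map_prod χ]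
      simp only [hχmapC]
      have h1 : χ (C (monomial s 1)) = φ (monomial s 1) := by
        rw [hχ, eval₂Hom_C]
      rw [h1]
      linear_combination φ ((monomial s) 1) * hprodkey s hs
    rw [Finset.sum_congr rfl hterm, ← Finset.sum_mul]
    have hsum : ∑ s ∈ P.support, (P.coeff s).val * φ (monomial s 1)
        = eval (derivVec (m + 1) a) (P.map (derivClosure (B ∪ {b})).subtype) := by
      conv_rhs => rw [P.as_sum]
      rw [map_sum (MvPolynomial.map (derivClosure (B ∪ {b})).subtype),
        map_sum (eval (derivVec (m + 1) a))]
      refine Finset.sum_congr rfl fun s hs => ?_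
      simp [hφ, map_monomial, eval_monomial]
    rw [hsum, hPe, zero_mul]
  -- restrict φ to land in `ℚ⟨B ∪ {a}⟩`
  set φ' : MvPolynomial (Fin (m + 1)) (derivClosure B) →+* (derivClosure (B ∪ {a})) :=
    RingHom.codRestrict φ (derivClosure (B ∪ {a})) hφmem with hφ'
  have hφ'inj : Function.Injective φ' := by
    intro x y hxy
    apply hφinj
    exact congrArg Subtype.val hxy
  refine ⟨N, MvPolynomial.map φ' Q, ?_, ?_⟩
  · intro h0
    exact hQ0 (MvPolynomial.map_injective φ' hφ'inj (by rw [h0, map_zero]))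
  · rw [MvPolynomial.map_map]
    have hcomp : ((derivClosure (B ∪ {a})).subtype).comp φ' = φ := RingHom.ext fun x => rfl
    rw [hcomp, ← hdb, eval_map]
    exact hχQ
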